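/- Let f, g : (0,∞) → ℝ be positive integrable functions such that f/g is non-increasing. Then the function r ↦ (∫₀ʳ f(t) dt) / (∫₀ʳ g(t) dt) is also non-increasing on (0,∞). -/
import Mathlib


open Real MeasureTheory Set

/-- Gromov's lemma: if `f/g` is non-increasing on `(0,∞)` for positive integrable `f, g`,
then `r ↦ (∫₀ʳ f) / (∫₀ʳ g)` is non-increasing on `(0,∞)`. -/
theorem stmt_0 (f g : ℝ → ℝ)
    (hf_pos : ∀ t, 0 < t → 0 < f t) (hg_pos : ∀ t, 0 < t → 0 < g t)
    (hf_int : ∀ r, 0 < r → IntervalIntegrable f volume 0 r)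
    (hg_int : ∀ r, 0 < r → IntervalIntegrable g volume 0 r)
    (hratio : ∀ r R, 0 < r → r ≤ R → f R / g R ≤ f r / g r) :
    ∀ r R, 0 < r → r ≤ R →
      (∫ t in (0:ℝ)..R, f t) / (∫ t in (0:ℝ)..R, g t) ≤
      (∫ t in (0:ℝ)..r, f t) / (∫ t in (0:ℝ)..r, g t) := by
  intro r R hr hrR
  have hR : (0:ℝ) < R := hr.trans_le hrR
  set c := f r / g r with hc_def
  have hc : 0 < c := div_pos (hf_pos r hr) (hg_pos r hr)
  have hB : 0 < ∫ t in (0:ℝ)..r, g t :=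
    intervalIntegral.intervalIntegral_pos_of_pos_on (hg_int r hr)
      (fun x hx => hg_pos x hx.1) hr
  have hBR : 0 < ∫ t in (0:ℝ)..R, g t :=
    intervalIntegral.intervalIntegral_pos_of_pos_on (hg_int R hR)
      (fun x hx => hg_pos x hx.1) hR
  have hfint' : IntervalIntegrable f volume r R := (hf_int r hr).symm.trans (hf_int R hR)
  have hgint' : IntervalIntegrable g volume r R := (hg_int r hr).symm.trans (hg_int R hR)
  -- tail bound: ∫ᵣᴿ f ≤ c * ∫ᵣᴿ g
  have hA' : (∫ t in r..R, f t) ≤ c * ∫ t in r..R, g t := by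
    rw [← intervalIntegral.integral_const_mul]
    apply intervalIntegral.integral_mono_on hrR hfint' (hgint'.const_mul c)
    intro x hx
    have hx0 : 0 < x := hr.trans_le hx.1
    have := hratio r x hr hx.1
    rw [div_le_div_iff₀ (hg_pos x hx0) (hg_pos r hr)] at this
    rw [hc_def, div_mul_eq_mul_div, le_div_iff₀ (hg_pos r hr)]
    linarith [this]
  -- head bound: c * ∫₀ʳ g ≤ ∫₀ʳ f
  have hA : c * (∫ t in (0:ℝ)..r, g t) ≤ ∫ t in (0:ℝ)..r, f t := by
    rw [← intervalIntegral.integral_const_mul]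
    apply intervalIntegral.integral_mono_ae_restrict hr.le ((hg_int r hr).const_mul c)
      (hf_int r hr)
    rw [← Measure.restrict_congr_set Ioc_ae_eq_Icc]
    refine (ae_restrict_iff' measurableSet_Ioc).mpr (Filter.Eventually.of_forall ?_)
    intro t ht
    have := hratio t r ht.1 ht.2
    rw [div_le_div_iff₀ (hg_pos r hr) (hg_pos t ht.1)] at this
    show f r / g r * g t ≤ f t
    rw [div_mul_eq_mul_div, div_le_iff₀ (hg_pos r hr)]
    linarith [this]
  have hB'nn : 0 ≤ ∫ t in r..R, g t := by
    apply intervalIntegral.integral_nonneg hrR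
    intro x hx
    exact (hg_pos x (hr.trans_le hx.1)).le
  have hsplitf : (∫ t in (0:ℝ)..R, f t) = (∫ t in (0:ℝ)..r, f t) + ∫ t in r..R, f t :=
    (intervalIntegral.integral_add_adjacent_intervals (hf_int r hr) hfint').symm
  have hsplitg : (∫ t in (0:ℝ)..R, g t) = (∫ t in (0:ℝ)..r, g t) + ∫ t in r..R, g t :=
    (intervalIntegral.integral_add_adjacent_intervals (hg_int r hr) hgint').symm
  rw [div_le_div_iff₀ hBR hB, hsplitf, hsplitg]
  nlinarith [mul_le_mul_of_nonneg_right hA' hB.le, mul_le_mul_of_nonneg_right hA hB'nn]
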